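/- Let G be a finite group and H, K₁ ⊆ K₂ subgroups of G. Then Pr(H,K₁) ≥ Pr(H,K₂), with equality if and only if Cl_{K₁}(x) = Cl_{K₂}(x) for all x ∈ H. -/

import Mathlib

/-- The probability that a random pair `(x, y) ∈ H × K` commutes. -/
noncomputable def prSub {G : Type*} [Group G] (H K : Subgroup G) : ℚ :=
  (Nat.card {p : H × K // (p.1 : G) * (p.2 : G) = (p.2 : G) * (p.1 : G)} : ℚ) /
    ((Nat.card H : ℚ) * (Nat.card K : ℚ))

namespace PrSubAux

variable {G : Type*} [Group G] [Fintype G]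

lemma orbit_stab (K : Subgroup G) (x : G) :
    Nat.card {z : G | ∃ y ∈ K, y * x * y⁻¹ = z} *
      Nat.card {y : K // (x : G) * (y : G) = (y : G) * (x : G)} = Nat.card K := by
  letI : MulAction ↥K G :=
    MulAction.compHom G ((ConjAct.toConjAct (G := G)).toMonoidHom.comp K.subtype)
  have hsmul : ∀ (y : K) (z : G), y • z = (y : G) * z * (y : G)⁻¹ := fun y z => rfl
  have horb : MulAction.orbit ↥K x = {z : G | ∃ y ∈ K, y * x * y⁻¹ = z} := by
    ext z
    simp only [MulAction.mem_orbit_iff, hsmul, Set.mem_setOf_eq]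
    constructor
    · rintro ⟨y, rfl⟩; exact ⟨y, y.2, rfl⟩
    · rintro ⟨y, hy, rfl⟩; exact ⟨⟨y, hy⟩, rfl⟩
  have hstab : Nat.card (MulAction.stabilizer ↥K x)
      = Nat.card {y : K // (x : G) * (y : G) = (y : G) * (x : G)} := by
    apply Nat.card_congr
    apply Equiv.subtypeEquivRight
    intro y
    simp only [MulAction.mem_stabilizer_iff, hsmul, mul_inv_eq_iff_eq_mul]
    exact eq_comm
  have := Subgroup.card_eq_card_quotient_mul_card_subgroup (MulAction.stabilizer ↥K x)
  rw [this, ← Nat.card_congr (MulAction.orbitEquivQuotientStabilizer ↥K x), horb, hstab]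

lemma card_pairs (H K : Subgroup G) [Fintype ↥H] :
    Nat.card {p : H × K // (p.1 : G) * (p.2 : G) = (p.2 : G) * (p.1 : G)}
      = ∑ x : H, Nat.card {y : K // (x : G) * (y : G) = (y : G) * (x : G)} := by
  rw [Nat.card_congr (Equiv.subtypeProdEquivSigmaSubtype
    (fun (x : H) (y : K) => (x : G) * (y : G) = (y : G) * (x : G)))]
  classical
  have : ∀ x : H, Fintype {y : K // (x : G) * (y : G) = (y : G) * (x : G)} :=
    fun _ => Fintype.ofFinite _
  rw [Nat.card_eq_fintype_card, Fintype.card_sigma]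
  simp [Nat.card_eq_fintype_card]

lemma cl_pos (K : Subgroup G) (x : G) :
    0 < Nat.card {z : G | ∃ y ∈ K, y * x * y⁻¹ = z} := by
  have : x ∈ {z : G | ∃ y ∈ K, y * x * y⁻¹ = z} := ⟨1, K.one_mem, by simp⟩
  exact Nat.card_pos_iff.mpr ⟨⟨x, this⟩, Set.toFinite _⟩

lemma cent_pos (K : Subgroup G) (x : G) :
    0 < Nat.card {y : K // (x : G) * (y : G) = (y : G) * (x : G)} :=
  Nat.card_pos_iff.mpr ⟨⟨1, by simp⟩, Subtype.finite⟩

lemma prSub_formula (H K : Subgroup G) [Fintype ↥H] :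
    prSub H K = (∑ x : H,
      ((Nat.card {z : G | ∃ y ∈ K, y * (x : G) * y⁻¹ = z} : ℚ))⁻¹) / (Nat.card H : ℚ) := by
  have hK : (Nat.card K : ℚ) ≠ 0 := by
    exact_mod_cast (Nat.card_pos (α := ↥K)).ne'
  rw [prSub, card_pairs H K]
  push_cast
  rw [Finset.sum_div, Finset.sum_div]
  congr 1
  ext x
  have h := orbit_stab K (x : G)
  have hcl := cl_pos K (x : G)
  have hc := cent_pos K (x : G)
  set c := Nat.card {y : K // (x : G) * (y : G) = (y : G) * (x : G)}
  set cl := Nat.card {z : G | ∃ y ∈ K, y * (x : G) * y⁻¹ = z}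
  have hq : (cl : ℚ) * (c : ℚ) = (Nat.card K : ℚ) := by exact_mod_cast h
  rw [div_mul_eq_div_div, ← hq]
  have hc' : (c : ℚ) ≠ 0 := by exact_mod_cast hc.ne'
  have hcl' : (cl : ℚ) ≠ 0 := by exact_mod_cast hcl.ne'
  have hH' : (Nat.card ↥H : ℚ) ≠ 0 := by
    exact_mod_cast (Nat.card_pos (α := ↥H)).ne'
  field_simp

end PrSubAux

theorem prSub_antitone (G : Type*) [Group G] [Fintype G]
    (H K₁ K₂ : Subgroup G) (hK : K₁ ≤ K₂) :
    prSub H K₁ ≥ prSub H K₂ ∧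
      (prSub H K₁ = prSub H K₂ ↔ ∀ x ∈ H,
        {z : G | ∃ y ∈ K₁, y * x * y⁻¹ = z} = {z : G | ∃ y ∈ K₂, y * x * y⁻¹ = z}) := by
  classical
  have : Fintype ↥H := Fintype.ofFinite _
  set S₁ : G → Set G := fun x => {z : G | ∃ y ∈ K₁, y * x * y⁻¹ = z} with hS₁
  set S₂ : G → Set G := fun x => {z : G | ∃ y ∈ K₂, y * x * y⁻¹ = z} with hS₂
  have hsub : ∀ x : G, S₁ x ⊆ S₂ x := by
    rintro x z ⟨y, hy, rfl⟩; exact ⟨y, hK hy, rfl⟩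
  have hcardle : ∀ x : G, Nat.card (S₁ x) ≤ Nat.card (S₂ x) := fun x =>
    Nat.card_mono (Set.toFinite _) (hsub x)
  have hpos : ∀ x : G, (0 : ℚ) < (Nat.card (S₁ x) : ℚ) := fun x => by
    exact_mod_cast PrSubAux.cl_pos K₁ x
  have hle : ∀ x : H, ((Nat.card (S₂ (x : G)) : ℚ))⁻¹ ≤ ((Nat.card (S₁ (x : G)) : ℚ))⁻¹ :=
    fun x => inv_anti₀ (hpos x) (by exact_mod_cast hcardle (x : G))
  have hform₁ := PrSubAux.prSub_formula H K₁
  have hform₂ := PrSubAux.prSub_formula H K₂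
  have hHpos : (0 : ℚ) < (Nat.card ↥H : ℚ) := by exact_mod_cast Nat.card_pos (α := ↥H)
  have hsumle : ∑ x : H, ((Nat.card (S₂ (x : G)) : ℚ))⁻¹
      ≤ ∑ x : H, ((Nat.card (S₁ (x : G)) : ℚ))⁻¹ :=
    Finset.sum_le_sum fun x _ => hle x
  constructor
  · rw [hform₁, hform₂]
    exact (div_le_div_iff_of_pos_right hHpos).mpr hsumle
  · rw [hform₁, hform₂, div_left_inj' hHpos.ne']
    rw [eq_comm, Finset.sum_eq_sum_iff_of_le (fun x _ => hle x)]
    constructor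
    · intro h x hx
      have := h ⟨x, hx⟩ (Finset.mem_univ _)
      have hcard : Nat.card (S₁ x) = Nat.card (S₂ x) := by
        have := inv_injective this
        exact_mod_cast this.symm
      exact Set.eq_of_subset_of_ncard_le (hsub x)
        (by rw [← Nat.card_coe_set_eq, ← Nat.card_coe_set_eq, hcard])
    · intro h x _
      rw [hS₁, hS₂]
      simp only [h (x : G) x.2]
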